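/- In the q-shuffle algebra on two generators x,y, the generators satisfy the dual q-Serre relation: y⋆y⋆y⋆x - [3]_q y⋆y⋆x⋆y + [3]_q y⋆x⋆y⋆y - x⋆y⋆y⋆y = 0. -/

import Mathlib

open scoped Classical

inductive Letter | x | y
deriving DecidableEq

instance : Fintype Letter := ⟨{.x, .y}, fun a => by cases a <;> simp⟩

/-- x ↦ 1, y ↦ -1 -/
def bar : Letter → ℤ
  | .x => 1
  | .y => -1

/-- σ swaps the letters x and y. -/
def sigma : Letter → Letter
  | .x => .y
  | .y => .x

/-- the pairing ⟨u,v⟩ : 2 if u = v, -2 otherwise. -/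
def pair : Letter → Letter → ℤ := fun u v => if u = v then 2 else -2

noncomputable section

/-- The free associative algebra on the two letters x, y (with its word basis). -/
abbrev V (F : Type*) [Field F] := MonoidAlgebra F (FreeMonoid Letter)

variable {F : Type*} [Field F]

/-- the basis word of V corresponding to a list of letters -/
def wd (w : List Letter) : V F := MonoidAlgebra.single (FreeMonoid.ofList w) 1

/-- the q-shuffle product of two words, by the left recursion -/
def shuffleWord (q : F) : List Letter → List Letter → V F
  | [], v => wd v
  | u1 :: ut, [] => wd (u1 :: ut)
  | u1 :: ut, v1 :: vt =>
      wd [u1] * shuffleWord q ut (v1 :: vt)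
      + q ^ (((u1 :: ut).map (fun a => pair a v1)).sum) •
          (wd [v1] * shuffleWord q (u1 :: ut) vt)
termination_by u v => u.length + v.length

/-- the q-shuffle product on V, extended bilinearly -/
def shuffle (q : F) (a b : V F) : V F :=
  a.coeff.sum fun u cu => b.coeff.sum fun v cv =>
    (cu * cv) • shuffleWord q (FreeMonoid.toList u) (FreeMonoid.toList v)

/-- the quantum integer [m]_q -/
def qint (q : F) (m : ℤ) : F := (q ^ m - q ^ (-m)) / (q - q⁻¹)

/-- the quantum factorial [m]_q! -/
def qfac (q : F) (m : ℤ) : F := ∏ j ∈ Finset.range m.toNat, qint q ((j : ℤ) + 1)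

/-- e_i = ā_1 + ⋯ + ā_i, the i-th elevation of the word w -/
def esum (w : List Letter) (i : ℕ) : ℤ := ((w.take i).map bar).sum

/-- A word is Catalan when all partial sums of bar are nonnegative and the total is zero. -/
def IsCatalan (w : List Letter) : Prop :=
  (∀ i, i ≤ w.length → 0 ≤ esum w i) ∧ esum w w.length = 0

/-- the coefficient C(w) = ∏_{i=0}^{2n} [1 + e_i]_q -/
def Ccoef (q : F) (w : List Letter) : F :=
  ∏ i ∈ Finset.range (w.length + 1), qint q (1 + esum w i)

/-- the n-th Catalan element C_n = ∑_{w ∈ Cat_n} C(w) w  -/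
def catalanElt (q : F) (n : ℕ) : V F :=
  ∑ f : Fin (2 * n) → Letter,
    if IsCatalan (List.ofFn f) then Ccoef q (List.ofFn f) • wd (List.ofFn f) else 0

/-- the antiautomorphism ζ : reverse the word and swap x,y, extended linearly -/
def zeta (a : V F) : V F :=
  a.coeff.sum fun w c =>
    MonoidAlgebra.single (FreeMonoid.ofList (((FreeMonoid.toList w).map sigma).reverse)) c

/-- The profile of a word: delete from the elevation sequence every interior e_i
    such that e_{i+1}-e_i and e_i-e_{i-1} have the same sign. -/
def profile (w : List Letter) : List ℤ :=
  (List.range (w.length + 1)).filterMap fun i =>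
    if i = 0 ∨ i = w.length then some (esum w i)
    else if 0 < (esum w (i + 1) - esum w i) * (esum w i - esum w (i - 1)) then none
    else some (esum w i)

/-- The list (ℓ_0, h_1, ℓ_1, h_2, …, h_r, ℓ_r). -/
def P (r : ℕ) (ℓ h : ℕ → ℤ) : List ℤ :=
  List.ofFn fun i : Fin (2 * r + 1) =>
    if i.val % 2 = 0 then ℓ (i.val / 2) else h ((i.val + 1) / 2)

/-- the word x^{h_1} y^{h_1-ℓ_1} x^{h_2-ℓ_1} y^{h_2-ℓ_2} ⋯ x^{h_r-ℓ_{r-1}} y^{h_r} -/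
def explicitWord (r : ℕ) (ℓ h : ℕ → ℤ) : List Letter :=
  (List.range r).flatMap fun i =>
    List.replicate (h (i + 1) - ℓ i).toNat Letter.x ++
      List.replicate (h (i + 1) - ℓ (i + 1)).toNat Letter.y

/-- C(ℓ_0,h_1,…,h_r,ℓ_r), the ratio of q-factorials attached to a profile. -/
def Cprof (q : F) (r : ℕ) (ℓ h : ℕ → ℤ) : F :=
  (∏ i ∈ Finset.Icc 1 r, qfac q (h i) * qfac q (h i + 1)) /
    (∏ i ∈ Finset.range (r + 1), qfac q (ℓ i) * qfac q (ℓ i + 1))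

end

section Aux
variable {F : Type*} [Field F]

lemma pair_xx : pair Letter.x Letter.x = 2 := rfl
lemma pair_yy : pair Letter.y Letter.y = 2 := rfl
lemma pair_xy : pair Letter.x Letter.y = -2 := rfl
lemma pair_yx : pair Letter.y Letter.x = -2 := rfl

lemma shuffle_single_single (q : F) (u v : FreeMonoid Letter) (c d : F) :
    shuffle q (MonoidAlgebra.single u c) (MonoidAlgebra.single v d)
      = (c * d) • shuffleWord q (FreeMonoid.toList u) (FreeMonoid.toList v) := by
  unfold shuffle
  rw [MonoidAlgebra.coeff_single, MonoidAlgebra.coeff_single]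
  rw [Finsupp.sum_single_index, Finsupp.sum_single_index] <;> simp

lemma shuffle_add_left (q : F) (a b v : V F) :
    shuffle q (a + b) v = shuffle q a v + shuffle q b v := by
  unfold shuffle
  rw [MonoidAlgebra.coeff_add]
  rw [Finsupp.sum_add_index] <;> intros <;> simp [add_mul, add_smul, Finsupp.sum_add]

lemma shuffle_smul_left (q : F) (c : F) (a v : V F) :
    shuffle q (c • a) v = c • shuffle q a v := by
  unfold shuffle
  rw [MonoidAlgebra.coeff_smul]
  rw [Finsupp.sum_smul_index, Finsupp.smul_sum] <;> simp [mul_assoc, mul_smul, Finsupp.smul_sum]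

end Aux

section Aux2
variable {F : Type*} [Field F]
lemma pow_to_zpow (a : F) (n : ℕ) : a ^ n = a ^ (n : ℤ) := (zpow_natCast a n).symm
end Aux2
set_option maxHeartbeats 4000000 in
theorem stmt6 {F : Type*} [Field F] (q : F) (hq0 : q ≠ 0)
    (hq : ∀ k : ℕ, 0 < k → q ^ k ≠ 1) :
    (shuffle q (shuffle q (shuffle q (wd [Letter.y] : V F) (wd [Letter.y] : V F)) (wd [Letter.y] : V F)) (wd [Letter.x] : V F))
      - (q ^ 2 + 1 + q ^ (-2 : ℤ)) • (shuffle q (shuffle q (shuffle q (wd [Letter.y] : V F) (wd [Letter.y] : V F)) (wd [Letter.x] : V F)) (wd [Letter.y] : V F))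
      + (q ^ 2 + 1 + q ^ (-2 : ℤ)) • (shuffle q (shuffle q (shuffle q (wd [Letter.y] : V F) (wd [Letter.x] : V F)) (wd [Letter.y] : V F)) (wd [Letter.y] : V F))
      - (shuffle q (shuffle q (shuffle q (wd [Letter.x] : V F) (wd [Letter.y] : V F)) (wd [Letter.y] : V F)) (wd [Letter.y] : V F)) = 0 := by
  simp only [wd, shuffle_single_single, shuffle_add_left, shuffle_smul_left, shuffleWord,
    pair_xx, pair_yy, pair_xy, pair_yx, MonoidAlgebra.single_mul_single, mul_add, mul_smul_comm,
    smul_add, one_mul, mul_one, one_smul, List.map_cons, List.map_nil, List.sum_cons,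
    List.sum_nil, FreeMonoid.toList_ofList, ← FreeMonoid.ofList_append, List.cons_append,
    List.nil_append, List.append_nil, smul_smul, Int.reduceNeg, Int.reduceAdd]
  match_scalars
  · simp only [← zpow_natCast, Nat.cast_ofNat, ← zpow_mul, ← zpow_add₀ hq0,
      Int.reduceNeg, Int.reduceAdd, Int.reduceMul, zpow_zero]
    simp only [zpow_neg, zpow_ofNat, ← inv_pow]
    linear_combination ((-1) + q⁻¹ ^ 2 - q * q⁻¹ + q * q⁻¹ ^ 3 - q ^ 2 - q ^ 3 * q⁻¹) * mul_inv_cancel₀ hq0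
  · simp only [← zpow_natCast, Nat.cast_ofNat, ← zpow_mul, ← zpow_add₀ hq0,
      Int.reduceNeg, Int.reduceAdd, Int.reduceMul, zpow_zero]
    simp only [zpow_neg, zpow_ofNat, ← inv_pow]
    linear_combination (1 + q⁻¹ ^ 2 + q * q⁻¹ + q * q⁻¹ ^ 3 + q ^ 2 + q ^ 3 * q⁻¹) * mul_inv_cancel₀ hq0
  · simp only [← zpow_natCast, Nat.cast_ofNat, ← zpow_mul, ← zpow_add₀ hq0,
      Int.reduceNeg, Int.reduceAdd, Int.reduceMul, zpow_zero]
    simp only [zpow_neg, zpow_ofNat, ← inv_pow]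
    linear_combination (1 + q⁻¹ ^ 2 + q * q⁻¹ + q * q⁻¹ ^ 3 + q ^ 2 + q ^ 3 * q⁻¹) * mul_inv_cancel₀ hq0
  · simp only [← zpow_natCast, Nat.cast_ofNat, ← zpow_mul, ← zpow_add₀ hq0,
      Int.reduceNeg, Int.reduceAdd, Int.reduceMul, zpow_zero]
    simp only [zpow_neg, zpow_ofNat, ← inv_pow]
    linear_combination ((-1) * q⁻¹ ^ 2 - q * q⁻¹ ^ 3 + q ^ 2 + q ^ 3 * q⁻¹) * mul_inv_cancel₀ hq0
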